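/- There exists a set S of 4 unit vectors in ℝ³ whose point group is trivial (only the identity isometry preserves S) but which has strictly positive extracopularity coefficient E (i.e., fewer distinct bond angles than bond pairs). -/

import Mathlib

open scoped RealInnerProductSpace Classical

noncomputable def vvAux : EuclideanSpace ℝ (Fin 3) :=
  (WithLp.equiv 2 (Fin 3 → ℝ)).symm ![2/7, 3/7, 6/7]

noncomputable def eeAux (i : Fin 3) : EuclideanSpace ℝ (Fin 3) := EuclideanSpace.single i 1

noncomputable def SSAux : Finset (EuclideanSpace ℝ (Fin 3)) :=
  {eeAux 0, eeAux 1, eeAux 2, vvAux}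

lemma eeAux_ne (i j : Fin 3) (h : i ≠ j) : eeAux i ≠ eeAux j := by
  intro hc
  have := congrFun (congrArg (WithLp.equiv 2 (Fin 3 → ℝ)) hc) i
  simp [eeAux, EuclideanSpace.single_apply, h] at this

lemma eeAux_ne_vv (i : Fin 3) : eeAux i ≠ vvAux := by
  intro hc
  have := congrFun (congrArg (WithLp.equiv 2 (Fin 3 → ℝ)) hc) i
  fin_cases i <;>
    simp [eeAux, vvAux, EuclideanSpace.single_apply, WithLp.equiv_symm_apply, PiLp.toLp_apply] at this <;>
    norm_num at this

lemma mem_SSAux (s : EuclideanSpace ℝ (Fin 3)) :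
    s ∈ SSAux ↔ s = eeAux 0 ∨ s = eeAux 1 ∨ s = eeAux 2 ∨ s = vvAux := by
  simp [SSAux]

noncomputable def wAux : EuclideanSpace ℝ (Fin 3) := eeAux 0 + eeAux 1 + eeAux 2 + vvAux

lemma inner_w₀ : ⟪eeAux 0, wAux⟫ = 9/7 := by
  simp [eeAux, vvAux, wAux, PiLp.inner_apply, Fin.sum_univ_three, PiLp.add_apply,
    EuclideanSpace.single_apply, WithLp.equiv_symm_apply, PiLp.toLp_apply]
  norm_num

lemma inner_w₁ : ⟪eeAux 1, wAux⟫ = 10/7 := by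
  simp [eeAux, vvAux, wAux, PiLp.inner_apply, Fin.sum_univ_three, PiLp.add_apply,
    EuclideanSpace.single_apply, WithLp.equiv_symm_apply, PiLp.toLp_apply]
  norm_num

lemma inner_w₂ : ⟪eeAux 2, wAux⟫ = 13/7 := by
  simp [eeAux, vvAux, wAux, PiLp.inner_apply, Fin.sum_univ_three, PiLp.add_apply,
    EuclideanSpace.single_apply, WithLp.equiv_symm_apply, PiLp.toLp_apply]
  norm_num

lemma inner_wv : ⟪vvAux, wAux⟫ = 18/7 := by
  simp [eeAux, vvAux, wAux, PiLp.inner_apply, Fin.sum_univ_three, PiLp.add_apply,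
    EuclideanSpace.single_apply, WithLp.equiv_symm_apply, PiLp.toLp_apply]
  norm_num

lemma inner_w_inj : ∀ s ∈ SSAux, ∀ t ∈ SSAux, ⟪s, wAux⟫ = ⟪t, wAux⟫ → s = t := by
  intro s hs t ht h
  rw [mem_SSAux] at hs ht
  rcases hs with rfl | rfl | rfl | rfl <;> rcases ht with rfl | rfl | rfl | rfl <;>
    simp only [inner_w₀, inner_w₁, inner_w₂, inner_wv] at h <;>
    first | rfl | (norm_num at h)

lemma inner_cases : ∀ s ∈ SSAux, ∀ t ∈ SSAux, s ≠ t →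
    ⟪s, t⟫ = 0 ∨ ⟪s, t⟫ = 2/7 ∨ ⟪s, t⟫ = 3/7 ∨ ⟪s, t⟫ = 6/7 := by
  intro s hs t ht hne
  rw [mem_SSAux] at hs ht
  rcases hs with rfl | rfl | rfl | rfl <;> rcases ht with rfl | rfl | rfl | rfl <;>
    first
    | exact absurd rfl hne
    | (simp [eeAux, vvAux, PiLp.inner_apply, Fin.sum_univ_three,
        EuclideanSpace.single_apply, WithLp.equiv_symm_apply, PiLp.toLp_apply]; try norm_num)

lemma sum_SSAux : ∑ s ∈ SSAux, s = wAux := by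
  rw [SSAux]
  rw [Finset.sum_insert (by
      simp only [Finset.mem_insert, Finset.mem_singleton]
      push_neg
      exact ⟨eeAux_ne 0 1 (by decide), eeAux_ne 0 2 (by decide), eeAux_ne_vv 0⟩),
    Finset.sum_insert (by
      simp only [Finset.mem_insert, Finset.mem_singleton]
      push_neg
      exact ⟨eeAux_ne 1 2 (by decide), eeAux_ne_vv 1⟩),
    Finset.sum_insert (by
      simp only [Finset.mem_singleton]
      exact eeAux_ne_vv 2),
    Finset.sum_singleton, wAux, add_assoc, add_assoc]

lemma card_SSAux : SSAux.card = 4 := by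
  rw [SSAux]
  rw [Finset.card_insert_of_notMem (by
      simp only [Finset.mem_insert, Finset.mem_singleton]
      push_neg
      exact ⟨eeAux_ne 0 1 (by decide), eeAux_ne 0 2 (by decide), eeAux_ne_vv 0⟩),
    Finset.card_insert_of_notMem (by
      simp only [Finset.mem_insert, Finset.mem_singleton]
      push_neg
      exact ⟨eeAux_ne 1 2 (by decide), eeAux_ne_vv 1⟩),
    Finset.card_insert_of_notMem (by
      simp only [Finset.mem_singleton]
      exact eeAux_ne_vv 2),
    Finset.card_singleton]

lemma norm_SSAux : ∀ v ∈ SSAux, ‖v‖ = 1 := by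
  intro s hs
  rw [mem_SSAux] at hs
  rcases hs with rfl | rfl | rfl | rfl
  · simp [eeAux, EuclideanSpace.norm_single]
  · simp [eeAux, EuclideanSpace.norm_single]
  · simp [eeAux, EuclideanSpace.norm_single]
  · rw [EuclideanSpace.norm_eq]
    have h : ∑ i, ‖vvAux i‖ ^ 2 = 1 := by
      simp [vvAux, Fin.sum_univ_three, WithLp.equiv_symm_apply, PiLp.toLp_apply, Real.norm_eq_abs, sq_abs]
      norm_num
    rw [h, Real.sqrt_one]

/-- There exists a set `S` of 4 unit vectors in ℝ³ whose point group is trivial (only the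
identity isometry preserves `S`), yet which has fewer distinct bond angles than bond pairs,
i.e. strictly positive extracopularity coefficient `E = log₂ n − log₂ m`. -/
theorem exists_trivial_point_group_positive_extracopularity :
    ∃ S : Finset (EuclideanSpace ℝ (Fin 3)),
      S.card = 4 ∧ (∀ v ∈ S, ‖v‖ = 1) ∧
      (∀ μ : EuclideanSpace ℝ (Fin 3) ≃ₗᵢ[ℝ] EuclideanSpace ℝ (Fin 3),
        S.image μ = S → μ = LinearIsometryEquiv.refl ℝ (EuclideanSpace ℝ (Fin 3))) ∧
      (S.offDiag.image (fun p => Real.arccos ⟪p.1, p.2⟫)).card < Nat.choose 4 2 ∧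
      0 < Real.logb 2 (Nat.choose 4 2) -
          Real.logb 2 ((S.offDiag.image (fun p => Real.arccos ⟪p.1, p.2⟫)).card) := by
  refine ⟨SSAux, card_SSAux, norm_SSAux, ?_, ?_, ?_⟩
  · -- trivial point group
    intro μ hμ
    have hmem : ∀ s ∈ SSAux, μ s ∈ SSAux := fun s hs => hμ ▸ Finset.mem_image_of_mem μ hs
    have hw : μ wAux = wAux := by
      have h1 : ∑ s ∈ SSAux.image μ, s = ∑ s ∈ SSAux, μ s :=
        Finset.sum_image (fun x _ y _ h => μ.injective h)
      have h2 : μ wAux = ∑ s ∈ SSAux, μ s := by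
        rw [← sum_SSAux, map_sum]
      rw [h2, ← h1, hμ, sum_SSAux]
    have hfix : ∀ s ∈ SSAux, μ s = s := by
      intro s hs
      refine inner_w_inj (μ s) (hmem s hs) s hs ?_
      calc ⟪μ s, wAux⟫ = ⟪μ s, μ wAux⟫ := by rw [hw]
        _ = ⟪s, wAux⟫ := μ.inner_map_map s wAux
    have hbasis : ∀ i, μ (EuclideanSpace.single i (1:ℝ)) = EuclideanSpace.single i 1 := by
      intro i
      fin_cases i
      · exact hfix (eeAux 0) (by rw [mem_SSAux]; left; rfl)
      · exact hfix (eeAux 1) (by rw [mem_SSAux]; right; left; rfl)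
      · exact hfix (eeAux 2) (by rw [mem_SSAux]; right; right; left; rfl)
    have hmap : (μ.toLinearEquiv : EuclideanSpace ℝ (Fin 3) →ₗ[ℝ] EuclideanSpace ℝ (Fin 3))
        = LinearMap.id := by
      refine Module.Basis.ext (EuclideanSpace.basisFun (Fin 3) ℝ).toBasis fun i => ?_
      simpa [EuclideanSpace.basisFun_apply] using hbasis i
    refine LinearIsometryEquiv.ext fun x => ?_
    have := LinearMap.congr_fun hmap x
    simpa using this
  · -- fewer than 6 angles
    have hsub : SSAux.offDiag.image (fun p => Real.arccos ⟪p.1, p.2⟫) ⊆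
        ({Real.arccos 0, Real.arccos (2/7), Real.arccos (3/7), Real.arccos (6/7)} : Finset ℝ) := by
      intro a ha
      obtain ⟨p, hp, rfl⟩ := Finset.mem_image.mp ha
      obtain ⟨h1, h2, h3⟩ := Finset.mem_offDiag.mp hp
      rcases inner_cases p.1 h1 p.2 h2 h3 with h | h | h | h <;>
        simp [h]
    have hcard : (SSAux.offDiag.image (fun p => Real.arccos ⟪p.1, p.2⟫)).card ≤ 4 := by
      refine (Finset.card_le_card hsub).trans ?_
      refine (Finset.card_insert_le _ _).trans (Nat.succ_le_succ ?_)
      refine (Finset.card_insert_le _ _).trans (Nat.succ_le_succ ?_)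
      refine (Finset.card_insert_le _ _).trans (Nat.succ_le_succ ?_)
      simp
    calc (SSAux.offDiag.image (fun p => Real.arccos ⟪p.1, p.2⟫)).card ≤ 4 := hcard
      _ < Nat.choose 4 2 := by decide
  · -- positive E
    have h1 : 0 < (SSAux.offDiag.image (fun p => Real.arccos ⟪p.1, p.2⟫)).card := by
      refine Finset.card_pos.mpr ⟨Real.arccos ⟪eeAux 0, eeAux 1⟫, Finset.mem_image.mpr
        ⟨(eeAux 0, eeAux 1), Finset.mem_offDiag.mpr ⟨?_, ?_, eeAux_ne 0 1 (by decide)⟩, rfl⟩⟩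
      · rw [mem_SSAux]; left; rfl
      · rw [mem_SSAux]; right; left; rfl
    have hsub : SSAux.offDiag.image (fun p => Real.arccos ⟪p.1, p.2⟫) ⊆
        ({Real.arccos 0, Real.arccos (2/7), Real.arccos (3/7), Real.arccos (6/7)} : Finset ℝ) := by
      intro a ha
      obtain ⟨p, hp, rfl⟩ := Finset.mem_image.mp ha
      obtain ⟨hp1, hp2, hp3⟩ := Finset.mem_offDiag.mp hp
      rcases inner_cases p.1 hp1 p.2 hp2 hp3 with h | h | h | h <;> simp [h]
    have h4 : (SSAux.offDiag.image (fun p => Real.arccos ⟪p.1, p.2⟫)).card ≤ 4 := by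
      refine (Finset.card_le_card hsub).trans ?_
      refine (Finset.card_insert_le _ _).trans (Nat.succ_le_succ ?_)
      refine (Finset.card_insert_le _ _).trans (Nat.succ_le_succ ?_)
      refine (Finset.card_insert_le _ _).trans (Nat.succ_le_succ ?_)
      simp
    have hlt : Real.logb 2 ((SSAux.offDiag.image (fun p => Real.arccos ⟪p.1, p.2⟫)).card)
        < Real.logb 2 (Nat.choose 4 2) := by
      have h6 : ((Nat.choose 4 2 : ℕ) : ℝ) = 6 := by norm_num [Nat.choose]
      rw [h6]
      refine Real.logb_lt_logb (by norm_num) (by exact_mod_cast h1) ?_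
      calc ((SSAux.offDiag.image (fun p => Real.arccos ⟪p.1, p.2⟫)).card : ℝ) ≤ 4 := by
            exact_mod_cast h4
        _ < 6 := by norm_num
    linarith
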